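/- Define h_n(w,z) by h_0(w,z)=z, h_1(w,z)=w, h_{n+2}=h_{n+1}·h_n+c, and let d_n be the Fibonacci-type degrees with d_0=1, d_1=deg f, d_{n+1}=d_n+d_{n-1}. Then there exists R > 1 such that for all |w|, |z| > R and all n ≥ 0: R ≤ |h_n(w,z)| ≤ (e^{d_n}/2)·|z|^{d_n}·|w|^{d_n}. -/

import Mathlib

theorem stmt4 (c : ℂ) (h : ℕ → ℂ → ℂ → ℂ)
    (h0 : ∀ w z, h 0 w z = z) (h1 : ∀ w z, h 1 w z = w)
    (hrec : ∀ n w z, h (n + 2) w z = h (n + 1) w z * h n w z + c)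
    (d : ℕ → ℕ) (hd : 0 < d 1) (hd0 : d 0 = 1)
    (hdrec : ∀ n, d (n + 2) = d (n + 1) + d n) :
    ∃ R : ℝ, R > 1 ∧ ∀ w z : ℂ, ‖w‖ > R → ‖z‖ > R → ∀ n : ℕ,
      R ≤ ‖h n w z‖ ∧
      ‖h n w z‖ ≤
        Real.exp (d n) / 2 * ‖z‖ ^ (d n) * ‖w‖ ^ (d n) := by
  have hc0 : 0 ≤ ‖c‖ := norm_nonneg c
  refine ⟨‖c‖ + 2, by linarith, ?_⟩
  intro w z hw hz
  set R : ℝ := ‖c‖ + 2 with hRdef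
  have hR1 : 1 < R := by simp only [hRdef]; linarith
  have hz1 : 1 < ‖z‖ := lt_trans hR1 hz
  have hw1 : 1 < ‖w‖ := lt_trans hR1 hw
  have dpos : ∀ n, 1 ≤ d n := by
    have key : ∀ n, 1 ≤ d n ∧ 1 ≤ d (n + 1) := by
      intro n
      induction n with
      | zero => exact ⟨hd0.ge, hd⟩
      | succ k ih => exact ⟨ih.2, by rw [hdrec]; omega⟩
    exact fun n => (key n).1
  have expge : ∀ n, (2 : ℝ) ≤ Real.exp (d n) := by
    intro n
    have h1le : (1 : ℝ) ≤ (d n : ℝ) := by exact_mod_cast dpos n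
    calc (2 : ℝ) ≤ Real.exp 1 := by nlinarith [Real.exp_one_gt_d9]
      _ ≤ Real.exp (d n) := Real.exp_le_exp.mpr h1le
  have zpow1 : ∀ n, (1 : ℝ) ≤ ‖z‖ ^ d n :=
    fun n => one_le_pow₀ hz1.le
  have wpow1 : ∀ n, (1 : ℝ) ≤ ‖w‖ ^ d n :=
    fun n => one_le_pow₀ hw1.le
  have zpows : ∀ n, ‖z‖ ≤ ‖z‖ ^ d n :=
    fun n => le_self_pow₀ hz1.le (by have := dpos n; omega)
  have wpows : ∀ n, ‖w‖ ≤ ‖w‖ ^ d n :=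
    fun n => le_self_pow₀ hw1.le (by have := dpos n; omega)
  have key : ∀ n,
      (R ≤ ‖h n w z‖ ∧
        ‖h n w z‖ ≤
          Real.exp (d n) / 2 * ‖z‖ ^ d n * ‖w‖ ^ d n) ∧
      (R ≤ ‖h (n + 1) w z‖ ∧
        ‖h (n + 1) w z‖ ≤
          Real.exp (d (n + 1)) / 2 * ‖z‖ ^ d (n + 1) *
            ‖w‖ ^ d (n + 1)) := by
    intro n
    induction n with
    | zero =>
      refine ⟨⟨?_, ?_⟩, ?_, ?_⟩
      · rw [h0]; exact hz.le
      · rw [h0, hd0]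
        simp only [pow_one, Nat.cast_one]
        have e1 : (2 : ℝ) ≤ Real.exp 1 := by nlinarith [Real.exp_one_gt_d9]
        have t1 : ‖z‖ = 1 * ‖z‖ * 1 := by ring
        rw [t1]
        apply mul_le_mul (mul_le_mul (by linarith) (by linarith) (by linarith) (by linarith))
          hw1.le zero_le_one
        positivity
      · rw [h1]; exact hw.le
      · rw [h1]
        have t1 : ‖w‖ ≤ ‖z‖ ^ d 1 * ‖w‖ ^ d 1 := by
          calc ‖w‖ = 1 * ‖w‖ := (one_mul _).symm
            _ ≤ ‖z‖ ^ d 1 * ‖w‖ ^ d 1 :=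
                mul_le_mul (zpow1 1) (wpows 1) (by linarith) (by linarith [zpow1 1])
        have t2 : ‖z‖ ^ d 1 * ‖w‖ ^ d 1 ≤
            Real.exp (d 1) / 2 * (‖z‖ ^ d 1 * ‖w‖ ^ d 1) :=
          le_mul_of_one_le_left (by positivity) (by linarith [expge 1])
        calc ‖w‖ ≤ ‖z‖ ^ d 1 * ‖w‖ ^ d 1 := t1
          _ ≤ Real.exp (d 1) / 2 * (‖z‖ ^ d 1 * ‖w‖ ^ d 1) := t2
          _ = Real.exp (d 1) / 2 * ‖z‖ ^ d 1 * ‖w‖ ^ d 1 := by ring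
    | succ k ih =>
      obtain ⟨⟨l0, u0⟩, l1, u1⟩ := ih
      refine ⟨⟨l1, u1⟩, ?_, ?_⟩
      · rw [hrec]
        have habs : ‖h (k + 1) w z * h k w z‖ ≤
            ‖h (k + 1) w z * h k w z + c‖ + ‖c‖ := by
          have := norm_add_le (h (k + 1) w z * h k w z + c) (-c)
          simpa using this
        have hmul : ‖h (k + 1) w z * h k w z‖ =
            ‖h (k + 1) w z‖ * ‖h k w z‖ := norm_mul _ _
        have mm : R * R ≤ ‖h (k + 1) w z‖ * ‖h k w z‖ :=
          mul_le_mul l1 l0 (by linarith) (norm_nonneg _)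
        simp only [hRdef] at mm habs ⊢
        nlinarith [hc0, habs, mm, hmul]
      · rw [hrec]
        have ub : ‖h (k + 1) w z * h k w z + c‖ ≤
            ‖h (k + 1) w z‖ * ‖h k w z‖ + ‖c‖ := by
          calc ‖h (k + 1) w z * h k w z + c‖ ≤
              ‖h (k + 1) w z * h k w z‖ + ‖c‖ :=
                norm_add_le _ _
            _ = ‖h (k + 1) w z‖ * ‖h k w z‖ + ‖c‖ := by
                rw [norm_mul]
        have prod : ‖h (k + 1) w z‖ * ‖h k w z‖ ≤
            (Real.exp (d (k + 1)) / 2 * ‖z‖ ^ d (k + 1) *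
              ‖w‖ ^ d (k + 1)) *
            (Real.exp (d k) / 2 * ‖z‖ ^ d k * ‖w‖ ^ d k) :=
          mul_le_mul u1 u0 (norm_nonneg _) (by positivity)
        have hD : d (k + 2) = d (k + 1) + d k := hdrec k
        have eexp : Real.exp ((d (k + 1) + d k : ℕ) : ℝ) =
            Real.exp (d (k + 1)) * Real.exp (d k) := by
          push_cast
          rw [Real.exp_add]
        have prodeq : (Real.exp (d (k + 1)) / 2 * ‖z‖ ^ d (k + 1) *
              ‖w‖ ^ d (k + 1)) *
            (Real.exp (d k) / 2 * ‖z‖ ^ d k * ‖w‖ ^ d k) =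
            Real.exp (d (k + 1)) * Real.exp (d k) / 4 *
              ‖z‖ ^ (d (k + 1) + d k) * ‖w‖ ^ (d (k + 1) + d k) := by
          rw [pow_add, pow_add]; ring
        have hc_le : ‖c‖ ≤
            Real.exp (d (k + 1)) * Real.exp (d k) / 4 *
              ‖z‖ ^ (d (k + 1) + d k) * ‖w‖ ^ (d (k + 1) + d k) := by
          have zz : ‖c‖ ≤ ‖z‖ ^ (d (k + 1) + d k) := by
            calc ‖c‖ ≤ ‖z‖ := by simp only [hRdef] at hz; linarith
              _ ≤ ‖z‖ ^ (d (k + 1) + d k) :=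
                  le_self_pow₀ hz1.le (by have := dpos (k + 1); omega)
          have ww : (1 : ℝ) ≤ ‖w‖ ^ (d (k + 1) + d k) := one_le_pow₀ hw1.le
          have ee : (1 : ℝ) ≤ Real.exp (d (k + 1)) * Real.exp (d k) / 4 := by
            nlinarith [expge (k + 1), expge k]
          have t2 : ‖z‖ ^ (d (k + 1) + d k) ≤
              ‖z‖ ^ (d (k + 1) + d k) * ‖w‖ ^ (d (k + 1) + d k) :=
            le_mul_of_one_le_right (by positivity) ww
          have t3 : ‖z‖ ^ (d (k + 1) + d k) * ‖w‖ ^ (d (k + 1) + d k) ≤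
              Real.exp (d (k + 1)) * Real.exp (d k) / 4 *
                (‖z‖ ^ (d (k + 1) + d k) * ‖w‖ ^ (d (k + 1) + d k)) :=
            le_mul_of_one_le_left (by positivity) ee
          calc ‖c‖ ≤ ‖z‖ ^ (d (k + 1) + d k) := zz
            _ ≤ _ := t2
            _ ≤ _ := t3
            _ = Real.exp (d (k + 1)) * Real.exp (d k) / 4 *
                ‖z‖ ^ (d (k + 1) + d k) * ‖w‖ ^ (d (k + 1) + d k) := by
              ring
        rw [hD, eexp]
        linarith [ub, prod, hc_le, prodeq.le, prodeq.ge]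
  exact fun n => (key n).1
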